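/- arXiv:1706.10049 — 4 statements merged into one kernel-verified Lean document; each statement's English description precedes it below -/
import Mathlib

section
/- In any labelled Markov process with measurable singletons, if s and t are state-bisimilar then the Dirac measures δ_s and δ_t are subdistribution-bisimilar. -/
open MeasureTheory ProbabilityTheory Filter

/-- A (sub)distribution: a measure of total mass at most 1. -/
def IsSubdist {S : Type*} [MeasurableSpace S] (μ : Measure S) : Prop :=
  μ Set.univ ≤ 1

/-- A family of sub-Markov transition kernels (labelled Markov process). -/
def IsSubMarkov {S A : Type*} [MeasurableSpace S] (τ : A → Kernel S S) : Prop :=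
  ∀ a s, τ a s Set.univ ≤ 1

/-- One-step transition on subdistributions: μ →^a (step τ a μ). -/
noncomputable def step {S A : Type*} [MeasurableSpace S] (τ : A → Kernel S S)
    (a : A) (μ : Measure S) : Measure S :=
  μ.bind (τ a)

/-- Multi-step transition along a word. -/
noncomputable def wstep {S A : Type*} [MeasurableSpace S] (τ : A → Kernel S S) :
    List A → Measure S → Measure S
  | [], μ => μ
  | a :: w, μ => wstep τ w (step τ a μ)

/-- Subdistribution bisimulation relation. -/
def IsDBisim {S A : Type*} [MeasurableSpace S] (τ : A → Kernel S S)
    (R : Measure S → Measure S → Prop) : Prop :=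
  Symmetric R ∧
  (∀ μ ν, R μ ν → IsSubdist μ ∧ IsSubdist ν) ∧
  ∀ μ ν, R μ ν → μ Set.univ = ν Set.univ ∧ ∀ a, R (step τ a μ) (step τ a ν)

/-- Subdistribution bisimilarity. -/
def DBisim {S A : Type*} [MeasurableSpace S] (τ : A → Kernel S S)
    (μ ν : Measure S) : Prop :=
  ∃ R, IsDBisim τ R ∧ R μ ν

/-- The discounted trace pseudometric `d^c`. -/
noncomputable def dC {S A : Type*} [MeasurableSpace S] (τ : A → Kernel S S)
    (c : ℝ) (μ ν : Measure S) : ℝ :=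
  ⨆ w : List A, c ^ w.length *
    |(wstep τ w μ Set.univ).toReal - (wstep τ w ν Set.univ).toReal|

/-- A set is R-closed if it is closed under the relation R. -/
def RClosed {S : Type*} (R : S → S → Prop) (B : Set S) : Prop :=
  ∀ s t, s ∈ B → R s t → t ∈ B

/-- A state bisimulation: an equivalence relation such that related states have
equal transition probabilities to every measurable R-closed set. -/
def IsStateBisim {S A : Type*} [MeasurableSpace S] (τ : A → Kernel S S)
    (R : S → S → Prop) : Prop :=
  Equivalence R ∧
  ∀ s t, R s t → ∀ (a : A) (B : Set S), MeasurableSet B → RClosed R B →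
    τ a s B = τ a t B

/-- State bisimilarity implies subdistribution bisimilarity of the Dirac measures. -/
theorem state_bisim_implies_dbisim {S A : Type*} [MeasurableSpace S]
    [MeasurableSingletonClass S]
    (τ : A → Kernel S S) (hτ : IsSubMarkov τ) (s t : S)
    (h : ∃ R, IsStateBisim τ R ∧ R s t) :
    DBisim τ (Measure.dirac s) (Measure.dirac t) := by
  obtain ⟨R, ⟨hEq, hTr⟩, hst⟩ := h
  -- lifted relation on measures
  refine ⟨fun μ ν => IsSubdist μ ∧ IsSubdist ν ∧
      ∀ B, MeasurableSet B → RClosed R B → μ B = ν B, ⟨?_, ?_, ?_⟩, ?_, ?_, ?_⟩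
  · -- symmetric
    rintro μ ν ⟨h1, h2, h3⟩
    exact ⟨h2, h1, fun B hB hRB => (h3 B hB hRB).symm⟩
  · rintro μ ν ⟨h1, h2, _⟩; exact ⟨h1, h2⟩
  · rintro μ ν ⟨h1, h2, h3⟩
    refine ⟨h3 _ MeasurableSet.univ (fun _ _ _ _ => trivial), fun a => ?_⟩
    -- key: step preserves the relation
    have key : ∀ B : Set S, MeasurableSet B → RClosed R B →
        step τ a μ B = step τ a ν B := by
      intro B hB hRB
      have hf : Measurable (fun x => τ a x B) := Kernel.measurable_coe (τ a) hB
      have hinv : ∀ x y, R x y → τ a x B = τ a y B := fun x y hxy =>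
        hTr x y hxy a B hB hRB
      have hmap : μ.map (fun x => τ a x B) = ν.map (fun x => τ a x B) := by
        ext E hE
        rw [Measure.map_apply hf hE, Measure.map_apply hf hE]
        refine h3 _ (hf hE) ?_
        intro x y hx hxy
        simpa [Set.mem_preimage, ← hinv x y hxy] using hx
      rw [step, step, Measure.bind_apply hB (Kernel.measurable (τ a)).aemeasurable,
        Measure.bind_apply hB (Kernel.measurable (τ a)).aemeasurable,
        ← lintegral_map measurable_id' hf,
        ← lintegral_map measurable_id' hf, hmap]
    have hsub : ∀ ρ : Measure S, IsSubdist ρ → IsSubdist (step τ a ρ) := by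
      intro ρ hρ
      rw [IsSubdist, step,
        Measure.bind_apply MeasurableSet.univ (Kernel.measurable (τ a)).aemeasurable]
      calc ∫⁻ x, τ a x Set.univ ∂ρ ≤ ∫⁻ _, 1 ∂ρ :=
            lintegral_mono fun x => hτ a x
        _ = ρ Set.univ := by simp
        _ ≤ 1 := hρ
    exact ⟨hsub μ h1, hsub ν h2, key⟩
  · exact measure_mono (Set.subset_univ _) |>.trans (by simp)
  · exact measure_mono (Set.subset_univ _) |>.trans (by simp)
  · -- δ_s and δ_t agree on R-closed measurable sets
    intro B hB hRB
    rw [Measure.dirac_apply' s hB, Measure.dirac_apply' t hB]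
    have : s ∈ B ↔ t ∈ B :=
      ⟨fun hs => hRB s t hs hst, fun ht => hRB t s ht (hEq.symm hst)⟩
    by_cases hs : s ∈ B
    · simp [hs, this.mp hs]
    · simp [hs, Set.indicator_of_notMem (fun ht => hs (this.mpr ht))]
end

section
/- Let R be an equivalence relation on a measurable space (S,Σ), let f : S → [0,1] be measurable and constant on each R-equivalence class in the sense that f(s) = f(t) whenever s R t, and let μ, ν be subprobability measures agreeing on all measurable R-closed sets. Then ∫ f dμ = ∫ f dν. -/
open MeasureTheory

/-- If f : S → [0,1] is measurable and constant on R-equivalence classes, and the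
subprobability measures μ and ν agree on all measurable R-closed sets, then the
integrals of f agree. -/
theorem lintegral_eq_of_agree_on_rclosed {S : Type*} [MeasurableSpace S]
    (R : S → S → Prop) (hR : Equivalence R)
    (f : S → ENNReal) (hf : Measurable f) (hf1 : ∀ s, f s ≤ 1)
    (hconst : ∀ s t, R s t → f s = f t)
    (μ ν : Measure S) (hμ : μ Set.univ ≤ 1) (hν : ν Set.univ ≤ 1)
    (hagree : ∀ B : Set S, MeasurableSet B → RClosed R B → μ B = ν B) :
    ∫⁻ s, f s ∂μ = ∫⁻ s, f s ∂ν := by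
  have hmap : Measure.map f μ = Measure.map f ν := by
    ext A hA
    rw [Measure.map_apply hf hA, Measure.map_apply hf hA]
    exact hagree _ (hf hA) (fun s t hs hst => by
      simpa [Set.mem_preimage, ← hconst s t hst] using hs)
  calc ∫⁻ s, f s ∂μ = ∫⁻ x, x ∂(Measure.map f μ) := (lintegral_map measurable_id hf).symm
    _ = ∫⁻ x, x ∂(Measure.map f ν) := by rw [hmap]
    _ = ∫⁻ s, f s ∂ν := lintegral_map measurable_id hf
end

section
/- For subdistributions μ, ν of an LMP: μ ∼_d ν implies d^c(μ,ν) = 0 for all c ∈ (0,1], and conversely if d^c(μ,ν) = 0 for some c ∈ (0,1] then μ ∼_d ν. -/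
open MeasureTheory ProbabilityTheory Filter

lemma step_subdist {S A : Type*} [MeasurableSpace S] (τ : A → Kernel S S)
    (hτ : IsSubMarkov τ) (a : A) (μ : Measure S) (hμ : IsSubdist μ) :
    IsSubdist (step τ a μ) := by
  unfold IsSubdist step
  rw [Measure.bind_apply MeasurableSet.univ (τ a).measurable.aemeasurable]
  calc ∫⁻ s, τ a s Set.univ ∂μ ≤ ∫⁻ _, 1 ∂μ := lintegral_mono fun s => hτ a s
    _ = μ Set.univ := by simp
    _ ≤ 1 := hμ

lemma wstep_subdist {S A : Type*} [MeasurableSpace S] (τ : A → Kernel S S)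
    (hτ : IsSubMarkov τ) (w : List A) :
    ∀ μ : Measure S, IsSubdist μ → IsSubdist (wstep τ w μ) := by
  induction w with
  | nil => intro μ hμ; exact hμ
  | cons a w ih => intro μ hμ; exact ih _ (step_subdist τ hτ a μ hμ)

/-- The metric `d^c` characterises subdistribution bisimilarity. -/
theorem dbisim_iff_dC_eq_zero {S A : Type*} [MeasurableSpace S]
    (τ : A → Kernel S S) (hτ : IsSubMarkov τ) (μ ν : Measure S)
    (hμ : IsSubdist μ) (hν : IsSubdist ν) :
    (DBisim τ μ ν → ∀ c ∈ Set.Ioc (0:ℝ) 1, dC τ c μ ν = 0) ∧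
    ((∃ c ∈ Set.Ioc (0:ℝ) 1, dC τ c μ ν = 0) → DBisim τ μ ν) := by
  constructor
  · rintro ⟨R, ⟨hsym, hsd, hstep⟩, hR⟩ c hc
    have key : ∀ (w : List A) (μ ν : Measure S), R μ ν → R (wstep τ w μ) (wstep τ w ν) := by
      intro w
      induction w with
      | nil => intro μ ν h; exact h
      | cons a w ih => intro μ ν h; exact ih _ _ ((hstep μ ν h).2 a)
    have hz : ∀ w : List A, c ^ w.length *
        |(wstep τ w μ Set.univ).toReal - (wstep τ w ν Set.univ).toReal| = 0 := by
      intro w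
      have := (hstep _ _ (key w μ ν hR)).1
      rw [this]
      simp
    unfold dC
    rw [funext hz]
    exact ciSup_const
  · rintro ⟨c, hc, hd⟩
    set f : List A → ℝ := fun w => c ^ w.length *
      |(wstep τ w μ Set.univ).toReal - (wstep τ w ν Set.univ).toReal| with hf
    have hbdd : BddAbove (Set.range f) := by
      refine ⟨1, ?_⟩
      rintro x ⟨w, rfl⟩
      have h1 : (wstep τ w μ Set.univ).toReal ≤ 1 := by
        have := ENNReal.toReal_mono ENNReal.one_ne_top (wstep_subdist τ hτ w μ hμ)
        simpa using this
      have h2 : (wstep τ w ν Set.univ).toReal ≤ 1 := by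
        have := ENNReal.toReal_mono ENNReal.one_ne_top (wstep_subdist τ hτ w ν hν)
        simpa using this
      have h3 : (0:ℝ) ≤ (wstep τ w μ Set.univ).toReal := ENNReal.toReal_nonneg
      have h4 : (0:ℝ) ≤ (wstep τ w ν Set.univ).toReal := ENNReal.toReal_nonneg
      have habs : |(wstep τ w μ Set.univ).toReal - (wstep τ w ν Set.univ).toReal| ≤ 1 :=
        abs_sub_le_iff.mpr ⟨by linarith, by linarith⟩
      have hcpow : c ^ w.length ≤ 1 := pow_le_one₀ (le_of_lt hc.1) hc.2
      calc f w ≤ 1 * 1 :=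
            mul_le_mul hcpow habs (abs_nonneg _) (by linarith [hc.1.le, hc.2])
        _ = 1 := by ring
    have hmass : ∀ w : List A, wstep τ w μ Set.univ = wstep τ w ν Set.univ := by
      intro w
      have hle : f w ≤ 0 := hd ▸ le_ciSup hbdd w
      have hge : 0 ≤ f w := mul_nonneg (pow_nonneg hc.1.le _) (abs_nonneg _)
      have h0 : f w = 0 := le_antisymm hle hge
      have hcpos : (0:ℝ) < c ^ w.length := pow_pos hc.1 _
      have habs0 : |(wstep τ w μ Set.univ).toReal - (wstep τ w ν Set.univ).toReal| = 0 := by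
        rcases mul_eq_zero.mp h0 with h | h
        · exact absurd h hcpos.ne'
        · exact h
      have := sub_eq_zero.mp (abs_eq_zero.mp habs0)
      exact (ENNReal.toReal_eq_toReal_iff'
        (ne_top_of_le_ne_top ENNReal.one_ne_top (wstep_subdist τ hτ w μ hμ))
        (ne_top_of_le_ne_top ENNReal.one_ne_top (wstep_subdist τ hτ w ν hν))).mp this
    refine ⟨fun μ' ν' => IsSubdist μ' ∧ IsSubdist ν' ∧
      ∀ w : List A, wstep τ w μ' Set.univ = wstep τ w ν' Set.univ, ?_, hμ, hν, hmass⟩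
    refine ⟨fun μ' ν' h => ⟨h.2.1, h.1, fun w => (h.2.2 w).symm⟩,
      fun μ' ν' h => ⟨h.1, h.2.1⟩, fun μ' ν' h => ⟨h.2.2 [], fun a => ?_⟩⟩
    exact ⟨step_subdist τ hτ a μ' h.1, step_subdist τ hτ a ν' h.2.1,
      fun w => h.2.2 (a :: w)⟩
end

section
/- μ ∼_{ε'}^c ν (i.e., d^c(μ,ν) ≤ ε') if and only if there exists a family of symmetric relations (R_ε^c)_{ε>0} on subdistributions such that μ R_{ε'}^c ν and whenever ρ R_ε^c σ: (i) |ρ(S) − σ(S)| ≤ ε, and (ii) for each action a, if ρ →^a ρ' and σ →^a σ' then ρ' R_{ε/c}^c σ'. -/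
open MeasureTheory ProbabilityTheory Filter

/-- An approximating bisimulation relation with discounting factor c. -/
def IsApproxBisim {S A : Type*} [MeasurableSpace S] (τ : A → Kernel S S)
    (c : ℝ) (Rf : ℝ → Measure S → Measure S → Prop) : Prop :=
  ∀ ε : ℝ, 0 < ε → Symmetric (Rf ε) ∧
    ∀ μ ν, Rf ε μ ν →
      |(μ Set.univ).toReal - (ν Set.univ).toReal| ≤ ε ∧
      ∀ a, Rf (ε / c) (step τ a μ) (step τ a ν)


lemma subdist_step {S A : Type*} [MeasurableSpace S] {τ : A → Kernel S S}
    (hτ : IsSubMarkov τ) (a : A) {μ : Measure S} (hμ : IsSubdist μ) :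
    IsSubdist (step τ a μ) := by
  unfold IsSubdist step at *
  rw [Measure.bind_apply MeasurableSet.univ (Kernel.measurable (τ a)).aemeasurable]
  calc ∫⁻ s, τ a s Set.univ ∂μ ≤ ∫⁻ _, 1 ∂μ := by
        exact MeasureTheory.lintegral_mono fun s => hτ a s
    _ = μ Set.univ := by simp
    _ ≤ 1 := hμ

lemma subdist_wstep {S A : Type*} [MeasurableSpace S] {τ : A → Kernel S S}
    (hτ : IsSubMarkov τ) (w : List A) {μ : Measure S} (hμ : IsSubdist μ) :
    IsSubdist (wstep τ w μ) := by
  induction w generalizing μ with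
  | nil => exact hμ
  | cons a w ih => exact ih (subdist_step hτ a hμ)

lemma term_le_one {S A : Type*} [MeasurableSpace S] {τ : A → Kernel S S}
    (hτ : IsSubMarkov τ) {c : ℝ} (hc : c ∈ Set.Ioc (0:ℝ) 1) (w : List A)
    {μ ν : Measure S} (hμ : IsSubdist μ) (hν : IsSubdist ν) :
    c ^ w.length * |(wstep τ w μ Set.univ).toReal - (wstep τ w ν Set.univ).toReal| ≤ 1 := by
  have h1 : (wstep τ w μ Set.univ).toReal ≤ 1 := by
    have := subdist_wstep hτ w hμ
    simpa using ENNReal.toReal_mono (by norm_num) this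
  have h2 : (wstep τ w ν Set.univ).toReal ≤ 1 := by
    have := subdist_wstep hτ w hν
    simpa using ENNReal.toReal_mono (by norm_num) this
  have h3 : (0:ℝ) ≤ (wstep τ w μ Set.univ).toReal := ENNReal.toReal_nonneg
  have h4 : (0:ℝ) ≤ (wstep τ w ν Set.univ).toReal := ENNReal.toReal_nonneg
  have habs : |(wstep τ w μ Set.univ).toReal - (wstep τ w ν Set.univ).toReal| ≤ 1 := by
    rw [abs_sub_le_iff]; constructor <;> linarith
  have hcpow : c ^ w.length ≤ 1 := pow_le_one₀ hc.1.le hc.2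
  have hcpow0 : (0:ℝ) ≤ c ^ w.length := pow_nonneg hc.1.le _
  calc c ^ w.length * |(wstep τ w μ Set.univ).toReal - (wstep τ w ν Set.univ).toReal|
      ≤ 1 * 1 := mul_le_mul hcpow habs (abs_nonneg _) (by norm_num)
    _ = 1 := by norm_num

/-- `∼_ε'^c` coincides with `≈_ε'^c`. -/
theorem approx_metric_iff_approx_relation {S A : Type*} [MeasurableSpace S]
    (τ : A → Kernel S S) (hτ : IsSubMarkov τ) (c : ℝ) (hc : c ∈ Set.Ioc (0:ℝ) 1)
    (ε' : ℝ) (hε' : 0 < ε') (μ ν : Measure S) (hμ : IsSubdist μ) (hν : IsSubdist ν) :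
    dC τ c μ ν ≤ ε' ↔
      ∃ Rf : ℝ → Measure S → Measure S → Prop, IsApproxBisim τ c Rf ∧ Rf ε' μ ν := by
  obtain ⟨hc0, hc1⟩ := hc
  constructor
  · intro hle
    refine ⟨fun ε ρ σ => ∀ w : List A,
      c ^ w.length * |(wstep τ w ρ Set.univ).toReal - (wstep τ w σ Set.univ).toReal| ≤ ε,
      ?_, ?_⟩
    · intro ε hε
      refine ⟨fun ρ σ h w => by rw [abs_sub_comm]; exact h w, ?_⟩
      intro ρ σ h
      constructor
      · have := h []
        simpa [wstep] using this
      · intro a w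
        have := h (a :: w)
        simp only [wstep, List.length_cons, pow_succ] at this
        rw [le_div_iff₀ hc0]
        calc c ^ w.length *
              |(wstep τ w (step τ a ρ) Set.univ).toReal -
                (wstep τ w (step τ a σ) Set.univ).toReal| * c
            = c ^ w.length * c *
              |(wstep τ w (step τ a ρ) Set.univ).toReal -
                (wstep τ w (step τ a σ) Set.univ).toReal| := by ring
          _ ≤ ε := this
    · intro w
      have hbdd : BddAbove (Set.range fun w : List A =>
          c ^ w.length * |(wstep τ w μ Set.univ).toReal - (wstep τ w ν Set.univ).toReal|) :=
        ⟨1, by rintro x ⟨w, rfl⟩; exact term_le_one hτ ⟨hc0, hc1⟩ w hμ hν⟩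
      exact le_trans (le_ciSup hbdd w) hle
  · rintro ⟨Rf, hRf, hμν⟩
    have key : ∀ w : List A, ∀ ε : ℝ, 0 < ε → ∀ ρ σ : Measure S, Rf ε ρ σ →
        c ^ w.length * |(wstep τ w ρ Set.univ).toReal - (wstep τ w σ Set.univ).toReal| ≤ ε := by
      intro w
      induction w with
      | nil =>
        intro ε hε ρ σ h
        simpa [wstep] using ((hRf ε hε).2 ρ σ h).1
      | cons a w ih =>
        intro ε hε ρ σ h
        have hstep := ((hRf ε hε).2 ρ σ h).2 a
        have hεc : 0 < ε / c := div_pos hε hc0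
        have := ih (ε / c) hεc _ _ hstep
        simp only [wstep, List.length_cons, pow_succ]
        rw [le_div_iff₀ hc0] at this
        calc c ^ w.length * c *
              |(wstep τ w (step τ a ρ) Set.univ).toReal -
                (wstep τ w (step τ a σ) Set.univ).toReal|
            = c ^ w.length *
              |(wstep τ w (step τ a ρ) Set.univ).toReal -
                (wstep τ w (step τ a σ) Set.univ).toReal| * c := by ring
          _ ≤ ε := this
    exact ciSup_le fun w => key w ε' hε' μ ν hμν
end
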